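/- arXiv:1811.12000 — 4 statements merged into one kernel-verified Lean document; each statement's English description precedes it below -/
import Mathlib

section
/- Let h(t₁,t₂) = ρ(‖t₁-t₂‖₂) with ρ ∈ C², ρ(0)=1, ρ'(0)=0. For a unit vector v ∈ ℝ^d, the dipoles ν^η = δ_t - (δ_{t+ηv} - δ_t)/η satisfy ‖ν^η‖²_h → 1 + |ρ''(0)| as η → 0⁺. -/
open Filter Topology

/-- For the dipoles `ν^η = (1+1/η)δ_t - (1/η)δ_{t+ηv}` and the kernel
`h(t₁,t₂) = ρ(‖t₁-t₂‖₂)` with `ρ ∈ C²`, `ρ(0)=1`, `ρ'(0)=0`, `ρ''(0)<0`,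
the kernel norm `‖ν^η‖²_h = Σᵢⱼ cᵢcⱼ ρ(‖xᵢ-xⱼ‖)` tends to `1 + |ρ''(0)|` as `η → 0⁺`. -/
theorem dipole_norm_tendsto {d : ℕ} (ρ : ℝ → ℝ)
    (hρ : ContDiff ℝ 2 ρ) (hρ0 : ρ 0 = 1) (hρ'0 : deriv ρ 0 = 0)
    (hρ'' : deriv (deriv ρ) 0 < 0)
    (t v : EuclideanSpace ℝ (Fin d)) (hv : ‖v‖ = 1) :
    Tendsto (fun η : ℝ =>
        (1 + 1/η)^2 * ρ ‖t - t‖ + (1/η)^2 * ρ ‖(t + η • v) - (t + η • v)‖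
          - 2 * (1 + 1/η) * (1/η) * ρ ‖t - (t + η • v)‖)
      (𝓝[>] 0) (𝓝 (1 + |deriv (deriv ρ) 0|)) := by
  have hρ1 : Differentiable ℝ ρ := hρ.differentiable two_ne_zero
  have hρ1' : Differentiable ℝ (deriv ρ) := by
    have h : ContDiff ℝ (1 + 1 : ℕ) ρ := hρ
    exact ((contDiff_succ_iff_deriv.mp h).2.2).differentiable one_ne_zero
  -- slope limit: ρ'(x)/x → ρ''(0)
  have hslope : Tendsto (fun x : ℝ => deriv ρ x / x) (𝓝[>] 0) (𝓝 (deriv (deriv ρ) 0)) := by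
    have h := (hρ1' 0).hasDerivAt
    rw [hasDerivAt_iff_tendsto_slope] at h
    have h' := h.mono_left (nhdsWithin_mono 0 (fun x hx => ne_of_gt hx))
    refine h'.congr (fun x => ?_)
    simp [slope_def_field, hρ'0, div_eq_inv_mul, mul_comm]
  -- L'Hôpital: (1 - ρ x)/x² → -ρ''(0)/2
  have L1 : Tendsto (fun x : ℝ => (1 - ρ x) / x ^ 2) (𝓝[>] 0)
      (𝓝 (-(deriv (deriv ρ) 0) / 2)) := by
    apply HasDerivAt.lhopital_zero_nhdsGT
      (f' := fun x => -(deriv ρ x)) (g' := fun x => 2 * x)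
    · exact Eventually.of_forall fun x => ((hρ1 x).hasDerivAt.const_sub 1)
    · exact Eventually.of_forall fun x => by
        simpa [mul_comm] using (hasDerivAt_pow 2 x)
    · filter_upwards [self_mem_nhdsWithin] with x hx
      exact mul_ne_zero two_ne_zero (ne_of_gt hx)
    · have h1 : Tendsto (fun x => 1 - ρ x) (𝓝 (0:ℝ)) (𝓝 (1 - ρ 0)) :=
        tendsto_const_nhds.sub (hρ1.continuous.tendsto 0)
      rw [hρ0, sub_self] at h1
      exact h1.mono_left nhdsWithin_le_nhds
    · have h2 : Tendsto (fun x : ℝ => x ^ 2) (𝓝 (0:ℝ)) (𝓝 ((0:ℝ) ^ 2)) :=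
        (continuous_pow 2).tendsto 0
      simpa using h2.mono_left nhdsWithin_le_nhds
    · have h3 : Tendsto (fun x : ℝ => (deriv ρ x / x) * (-1 / 2)) (𝓝[>] 0)
          (𝓝 (deriv (deriv ρ) 0 * (-1 / 2))) := hslope.mul_const _
      have heq : ∀ x : ℝ, (deriv ρ x / x) * (-1 / 2) = -(deriv ρ x) / (2 * x) := by
        intro x
        rcases eq_or_ne x 0 with rfl | hx
        · simp
        · rw [div_mul_div_comm, mul_neg_one, mul_comm x 2]
      have h3' := h3.congr heq
      convert h3' using 2
      ring
  -- combined limit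
  have L2 : Tendsto (fun x : ℝ => 1 + (2 * x + 2) * ((1 - ρ x) / x ^ 2)) (𝓝[>] 0)
      (𝓝 (1 + (2 * 0 + 2) * (-(deriv (deriv ρ) 0) / 2))) := by
    refine tendsto_const_nhds.add (Tendsto.mul ?_ L1)
    have : Tendsto (fun x : ℝ => 2 * x + 2) (𝓝 (0:ℝ)) (𝓝 (2 * 0 + 2)) := by
      exact (tendsto_id.const_mul 2).add tendsto_const_nhds
    exact this.mono_left nhdsWithin_le_nhds
  have hlim : (1 : ℝ) + (2 * 0 + 2) * (-(deriv (deriv ρ) 0) / 2)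
      = 1 + |deriv (deriv ρ) 0| := by
    rw [abs_of_neg hρ'']; ring
  rw [hlim] at L2
  refine L2.congr' ?_
  filter_upwards [self_mem_nhdsWithin] with x hx
  have hx0 : x ≠ 0 := ne_of_gt hx
  have h1 : ‖t - t‖ = (0 : ℝ) := by simp
  have h2 : ‖(t + x • v) - (t + x • v)‖ = (0 : ℝ) := by simp
  have h3 : ‖t - (t + x • v)‖ = x := by
    have : t - (t + x • v) = -(x • v) := by abel
    rw [this, norm_neg, norm_smul, hv, Real.norm_eq_abs, abs_of_pos hx, mul_one]
  rw [h1, h2, h3, hρ0]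
  field_simp
  ring
end

section
/- Let a ∈ ℝ, b ∈ ℝ, and ν^η = (a + b/η)δ_t - (b/η)δ_{t+ηv} with ‖v‖₂=1, and h(t₁,t₂)=ρ(‖t₁-t₂‖₂) with ρ ∈ C², ρ(0)=1, ρ'(0)=0. Then ‖ν^η‖²_h = a² + 2(ab/η)(1-ρ(η)) + 2(b²/η²)(1-ρ(η)), and consequently ‖ν^η‖²_h → a² + b²|ρ''(0)| as η → 0⁺. -/
open Filter Topology

/-- For `ν^η = (a + b/η)δ_t - (b/η)δ_{t+ηv}` with `‖v‖₂ = 1` and kernel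
`h(t₁,t₂) = ρ(‖t₁-t₂‖₂)`, `ρ ∈ C²`, `ρ(0)=1`, `ρ'(0)=0`, `ρ''(0)<0`:
`‖ν^η‖²_h = a² + 2(ab/η)(1-ρ(η)) + 2(b²/η²)(1-ρ(η))` for `η > 0`, and
`‖ν^η‖²_h → a² + b²|ρ''(0)|` as `η → 0⁺`. -/
theorem dipole_norm_formula_and_limit {d : ℕ} (ρ : ℝ → ℝ)
    (hρ : ContDiff ℝ 2 ρ) (hρ0 : ρ 0 = 1) (hρ'0 : deriv ρ 0 = 0)
    (hρ'' : deriv (deriv ρ) 0 < 0)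
    (a b : ℝ) (t v : EuclideanSpace ℝ (Fin d)) (hv : ‖v‖ = 1) :
    (∀ η : ℝ, 0 < η →
      (a + b/η)^2 * ρ ‖t - t‖ + (b/η)^2 * ρ ‖(t + η • v) - (t + η • v)‖
        - 2 * (a + b/η) * (b/η) * ρ ‖t - (t + η • v)‖
      = a^2 + 2*(a*b/η)*(1 - ρ η) + 2*(b^2/η^2)*(1 - ρ η)) ∧
    Tendsto (fun η : ℝ =>
        (a + b/η)^2 * ρ ‖t - t‖ + (b/η)^2 * ρ ‖(t + η • v) - (t + η • v)‖
          - 2 * (a + b/η) * (b/η) * ρ ‖t - (t + η • v)‖)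
      (𝓝[>] 0) (𝓝 (a^2 + b^2 * |deriv (deriv ρ) 0|)) := by
  have hρdiff : Differentiable ℝ ρ := hρ.differentiable (by norm_num)
  have hρ' : ContDiff ℝ 1 (deriv ρ) := by
    have h2 : ContDiff ℝ (1 + 1) ρ := by norm_num [hρ]
    exact (contDiff_succ_iff_deriv.mp h2).2.2
  have hρ'diff : Differentiable ℝ (deriv ρ) := hρ'.differentiable one_ne_zero
  have key : ∀ η : ℝ, 0 < η →
      (a + b/η)^2 * ρ ‖t - t‖ + (b/η)^2 * ρ ‖(t + η • v) - (t + η • v)‖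
        - 2 * (a + b/η) * (b/η) * ρ ‖t - (t + η • v)‖
      = a^2 + 2*(a*b/η)*(1 - ρ η) + 2*(b^2/η^2)*(1 - ρ η) := by
    intro η hη
    have h1 : t - t = 0 := sub_self t
    have h2 : (t + η • v) - (t + η • v) = 0 := sub_self _
    have h3 : ‖t - (t + η • v)‖ = η := by
      have : t - (t + η • v) = -(η • v) := by abel
      rw [this, norm_neg, norm_smul, hv, Real.norm_of_nonneg hη.le, mul_one]
    rw [h1, h2, h3, norm_zero, hρ0]
    field_simp
    ring
  refine ⟨key, ?_⟩
  -- slope limit: (1 - ρ η)/η → 0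
  have T1 : Tendsto (fun η : ℝ => (1 - ρ η)/η) (𝓝[>] 0) (𝓝 0) := by
    have hd : Tendsto (slope ρ 0) (𝓝[≠] 0) (𝓝 (deriv ρ 0)) :=
      hasDerivAt_iff_tendsto_slope.mp (hρdiff 0).hasDerivAt
    have h := (hd.mono_left (nhdsWithin_mono _
      (fun x (hx : x ∈ Set.Ioi 0) => ne_of_gt hx))).neg
    rw [hρ'0, neg_zero] at h
    refine h.congr (fun η => ?_)
    simp only [slope_def_field, hρ0, sub_zero]
    rw [← neg_div, neg_sub]
  -- second order: (1 - ρ η)/η^2 → -ρ''(0)/2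
  have T2 : Tendsto (fun η : ℝ => (1 - ρ η)/η^2) (𝓝[>] 0)
      (𝓝 (-(deriv (deriv ρ) 0)/2)) := by
    apply HasDerivAt.lhopital_zero_nhdsGT
        (f' := fun η => -(deriv ρ η)) (g' := fun η => 2*η)
    · filter_upwards with x
      exact ((hρdiff x).hasDerivAt.const_sub 1)
    · filter_upwards with x
      simpa using (hasDerivAt_pow 2 x)
    · filter_upwards [self_mem_nhdsWithin] with x hx
      exact mul_ne_zero two_ne_zero (ne_of_gt hx)
    · have : ContinuousAt (fun η => 1 - ρ η) 0 := (continuous_const.sub hρ.continuous).continuousAt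
      have h2 : Tendsto (fun η => 1 - ρ η) (𝓝[>] (0:ℝ)) (𝓝 (1 - ρ 0)) :=
        this.tendsto.mono_left nhdsWithin_le_nhds
      simpa [hρ0] using h2
    · have : Tendsto (fun η : ℝ => η^2) (𝓝 0) (𝓝 0) := by
        simpa using (continuous_pow 2).tendsto (0:ℝ)
      exact this.mono_left nhdsWithin_le_nhds
    · -- (-deriv ρ η)/(2η) → -ρ''0/2
      have hd : Tendsto (slope (deriv ρ) 0) (𝓝[≠] 0) (𝓝 (deriv (deriv ρ) 0)) :=
        hasDerivAt_iff_tendsto_slope.mp (hρ'diff 0).hasDerivAt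
      have h := ((hd.mono_left (nhdsWithin_mono _
        (fun x (hx : x ∈ Set.Ioi 0) => ne_of_gt hx))).neg).div_const 2
      refine h.congr (fun η => ?_)
      simp only [slope_def_field, hρ'0, sub_zero]
      ring
  -- combine
  have habs : |deriv (deriv ρ) 0| = -(deriv (deriv ρ) 0) := abs_of_neg hρ''
  have Tmain : Tendsto (fun η : ℝ =>
      a^2 + 2*a*b*((1 - ρ η)/η) + 2*b^2*((1 - ρ η)/η^2)) (𝓝[>] 0)
      (𝓝 (a^2 + b^2 * |deriv (deriv ρ) 0|)) := by
    have := ((tendsto_const_nhds : Tendsto (fun _ : ℝ => a^2) (𝓝[>] 0) (𝓝 (a^2))).add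
      (T1.const_mul (2*a*b))).add (T2.const_mul (2*b^2))
    have he : a^2 + b^2 * |deriv (deriv ρ) 0|
        = a ^ 2 + 2 * a * b * 0 + 2 * b ^ 2 * (-deriv (deriv ρ) 0 / 2) := by
      rw [habs]; ring
    rw [he]; exact this
  refine Tendsto.congr' ?_ Tmain
  filter_upwards [self_mem_nhdsWithin] with η hη
  rw [key η hη]
  ring
end

section
/- Let g : ℝ^n → ℝ be C¹ with L-Lipschitz gradient, convex on an open convex set Λ containing a minimizer θ* of g, and suppose the gradient descent iterates θ_{n+1} = θ_n − τ ∇g(θ_n) all remain in Λ. If θ₀ ∈ Λ and 0 < τ < 1/L, then θ_n converges to a point θ̂ ∈ closure(Λ) with ∇g(θ̂) = 0, and g(θ_n) → g(θ*). -/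
open Filter Topology
open scoped RealInnerProductSpace

open scoped RealInnerProductSpace

section Helpers
variable {E : Type*} [NormedAddCommGroup E] [InnerProductSpace ℝ E] [CompleteSpace E]

lemma line_hasDerivAt (g : E → ℝ) (hg : Differentiable ℝ g) (x d : E) (t : ℝ) :
    HasDerivAt (fun s : ℝ => g (x + s • d)) ⟪gradient g (x + t • d), d⟫ t := by
  have hline : HasDerivAt (fun s : ℝ => x + s • d) d t := by
    simpa using ((hasDerivAt_id t).smul_const d).const_add x
  have hgp : HasGradientAt g (gradient g (x + t • d)) (x + t • d) :=
    (hg (x + t • d)).hasGradientAt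
  have hf : HasFDerivAt g (InnerProductSpace.toDual ℝ E (gradient g (x + t • d))) (x + t • d) :=
    hgp
  have := hf.comp_hasDerivAt t hline
  simpa [InnerProductSpace.toDual_apply_apply, Function.comp_def] using this

lemma descent_lemma (g : E → ℝ) (hg : Differentiable ℝ g) (L : ℝ)
    (hLip : ∀ x y, ‖gradient g x - gradient g y‖ ≤ L * ‖x - y‖) (x d : E) :
    g (x + d) ≤ g x + ⟪gradient g x, d⟫ + L / 2 * ‖d‖ ^ 2 := by
  set v : ℝ := ⟪gradient g x, d⟫ with hv
  set φ : ℝ → ℝ := fun t => g (x + t • d) - t * v - L / 2 * t ^ 2 * ‖d‖ ^ 2 with hφ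
  have hder : ∀ t : ℝ, HasDerivAt φ
      (⟪gradient g (x + t • d), d⟫ - v - L * t * ‖d‖ ^ 2) t := by
    intro t
    have h1 := line_hasDerivAt g hg x d t
    have h2 : HasDerivAt (fun t : ℝ => t * v) v t := by
      simpa using (hasDerivAt_id t).mul_const v
    have h3 : HasDerivAt (fun t : ℝ => L / 2 * t ^ 2 * ‖d‖ ^ 2) (L * t * ‖d‖ ^ 2) t := by
      have h4 : HasDerivAt (fun t : ℝ => t ^ 2) (2 * t) t := by
        simpa using hasDerivAt_pow 2 t
      have := (h4.const_mul (L / 2)).mul_const (‖d‖ ^ 2)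
      rw [show L * t * ‖d‖ ^ 2 = L / 2 * (2 * t) * ‖d‖ ^ 2 by ring]
      exact this
    simpa [hφ, Pi.sub_def] using (h1.sub h2).sub h3
  have hanti : AntitoneOn φ (Set.Icc (0:ℝ) 1) := by
    apply antitoneOn_of_deriv_nonpos (convex_Icc 0 1)
    · exact Continuous.continuousOn
        (Differentiable.continuous fun t => (hder t).differentiableAt)
    · intro t _
      exact ((hder t).differentiableAt).differentiableWithinAt
    · intro t ht
      rw [(hder t).deriv]
      rw [interior_Icc] at ht
      have hbd : ⟪gradient g (x + t • d) - gradient g x, d⟫ ≤ L * t * ‖d‖ ^ 2 := by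
        calc ⟪gradient g (x + t • d) - gradient g x, d⟫
            ≤ ‖gradient g (x + t • d) - gradient g x‖ * ‖d‖ := real_inner_le_norm _ _
          _ ≤ (L * ‖(x + t • d) - x‖) * ‖d‖ := by gcongr; exact hLip _ _
          _ = L * (|t| * ‖d‖) * ‖d‖ := by rw [add_sub_cancel_left, norm_smul]; norm_num
          _ = L * t * ‖d‖ ^ 2 := by rw [abs_of_pos ht.1]; ring
      rw [inner_sub_left] at hbd
      linarith
  have h01 := hanti (Set.mem_Icc.mpr ⟨le_refl 0, zero_le_one⟩)
      (Set.mem_Icc.mpr ⟨zero_le_one, le_refl 1⟩) zero_le_one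
  simp only [hφ, zero_smul, add_zero, one_smul, zero_mul, sub_zero, one_pow, mul_one] at h01
  nlinarith [h01]

lemma subgrad_ineq (g : E → ℝ) (hg : Differentiable ℝ g) {Λ : Set E}
    (hconv : ConvexOn ℝ Λ g) {x y : E} (hx : x ∈ Λ) (hy : y ∈ Λ) :
    g x + ⟪gradient g x, y - x⟫ ≤ g y := by
  set φ : ℝ → ℝ := fun t => g (x + t • (y - x)) with hφ
  have hd : HasDerivAt φ ⟪gradient g x, y - x⟫ 0 := by
    have := line_hasDerivAt g hg x (y - x) 0
    simpa using this
  have hslope : Tendsto (slope φ 0) (𝓝[>] 0) (𝓝 ⟪gradient g x, y - x⟫) :=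
    (hasDerivAt_iff_tendsto_slope.mp hd).mono_left
      (nhdsWithin_mono 0 (fun t ht => ne_of_gt ht))
  have hbound : ∀ᶠ t in 𝓝[>] (0:ℝ), slope φ 0 t ≤ g y - g x := by
    filter_upwards [Ioc_mem_nhdsGT (zero_lt_one : (0:ℝ) < 1)]
      with t ht
    obtain ⟨ht0, ht1⟩ := ht
    have hmem : x + t • (y - x) = (1 - t) • x + t • y := by
      rw [smul_sub, sub_smul, one_smul]; abel
    have hcv := hconv.2 hx hy (by linarith : (0:ℝ) ≤ 1 - t) (le_of_lt ht0) (by ring)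
    rw [← hmem] at hcv
    have h2 : φ t - φ 0 ≤ t * (g y - g x) := by
      simp only [hφ, zero_smul, add_zero]
      simp only [smul_eq_mul] at hcv
      nlinarith
    rw [slope_def_field]
    rw [sub_zero, div_le_iff₀ ht0]
    linarith
  have := le_of_tendsto hslope hbound
  linarith

lemma subgrad_ineq' (g : E → ℝ) (hg : Differentiable ℝ g) {Λ : Set E}
    (hconv : ConvexOn ℝ Λ g) {x y : E} (hx : x ∈ Λ) (hy : y ∈ closure Λ) :
    g x + ⟪gradient g x, y - x⟫ ≤ g y := by
  have hc1 : Continuous fun z : E => g x + ⟪gradient g x, z - x⟫ :=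
    continuous_const.add
      (Continuous.inner continuous_const (continuous_id.sub continuous_const))
  have hcl : closure Λ ⊆ {z : E | g x + ⟪gradient g x, z - x⟫ ≤ g z} :=
    closure_minimal (fun z hz => subgrad_ineq g hg hconv hx hz)
      (isClosed_le hc1 hg.continuous)
  exact hcl hy

end Helpers


/-- Convergence of fixed-step gradient descent: if `g` is `C¹` with `L`-Lipschitz
gradient, convex on an open convex set `Λ` containing a minimizer `θ*` of `g` over
`Λ`, the iterates stay in `Λ`, `θ₀ ∈ Λ` and `0 < τ < 1/L`, then the iterates
converge to a critical point `θ̂ ∈ closure Λ` and `g(θₙ) → g(θ*)`. -/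
theorem gradient_descent_converges {n : ℕ} (g : EuclideanSpace ℝ (Fin n) → ℝ)
    (hg : ContDiff ℝ 1 g) (L : NNReal) (hL : 0 < (L : ℝ))
    (hLip : LipschitzWith L (gradient g))
    (Λ : Set (EuclideanSpace ℝ (Fin n))) (hΛopen : IsOpen Λ) (hΛconv : Convex ℝ Λ)
    (hconv : ConvexOn ℝ Λ g)
    (θstar : EuclideanSpace ℝ (Fin n)) (hθstar : θstar ∈ Λ)
    (hmin : ∀ θ ∈ Λ, g θstar ≤ g θ)
    (τ : ℝ) (hτ0 : 0 < τ) (hτ : τ < 1 / (L : ℝ))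
    (θseq : ℕ → EuclideanSpace ℝ (Fin n))
    (hstep : ∀ i, θseq (i + 1) = θseq i - τ • gradient g (θseq i))
    (hin : ∀ i, θseq i ∈ Λ) (h0 : θseq 0 ∈ Λ) :
    ∃ θhat ∈ closure Λ, Tendsto θseq atTop (𝓝 θhat) ∧ gradient g θhat = 0 ∧
      Tendsto (fun i => g (θseq i)) atTop (𝓝 (g θstar)) := by
  have hgd : Differentiable ℝ g := hg.differentiable one_ne_zero
  have hLip' : ∀ x y, ‖gradient g x - gradient g y‖ ≤ (L : ℝ) * ‖x - y‖ := fun x y => by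
    simpa [dist_eq_norm] using hLip.dist_le_mul x y
  -- constants
  have hLτ : (L : ℝ) * τ < 1 := by rw [lt_div_iff₀ hL] at hτ; linarith
  obtain ⟨c, hcdef⟩ : ∃ c : ℝ, c = τ - L * τ ^ 2 / 2 := ⟨_, rfl⟩
  have hmul : (L : ℝ) * τ * τ < 1 * τ := mul_lt_mul_of_pos_right hLτ hτ0
  have hc : τ / 2 < c := by rw [hcdef]; nlinarith [hmul]
  have hc0 : 0 < c := by linarith
  obtain ⟨δ, hδdef⟩ : ∃ δ : ℝ, δ = 2 * τ - τ ^ 2 / c := ⟨_, rfl⟩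
  have hδ0 : 0 < δ := by
    have h2 : τ ^ 2 / c < 2 * τ := by
      rw [div_lt_iff₀ hc0, hcdef]
      nlinarith [mul_lt_mul_of_pos_right hLτ (mul_pos hτ0 hτ0)]
    rw [hδdef]; linarith
  obtain ⟨a, hadef⟩ : ∃ a : ℕ → ℝ, a = fun k => g (θseq k) - g θstar := ⟨_, rfl⟩
  obtain ⟨G, hGdef⟩ : ∃ G : ℕ → EuclideanSpace ℝ (Fin n), G = fun k => gradient g (θseq k) := ⟨_, rfl⟩
  have hGk : ∀ k, G k = gradient g (θseq k) := fun k => by rw [hGdef]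
  have ha_nonneg : ∀ k, 0 ≤ a k := fun k => hadef ▸ sub_nonneg.mpr (hmin _ (hin k))
  -- descent inequality
  have hdesc : ∀ k, g (θseq (k + 1)) + c * ‖G k‖ ^ 2 ≤ g (θseq k) := by
    intro k
    have hd := descent_lemma g hgd L hLip' (θseq k) (-(τ • G k))
    have hstep' : θseq k + -(τ • G k) = θseq (k + 1) := by
      rw [hstep k, hGk]; abel
    rw [hstep'] at hd
    have hi : ⟪G k, -(τ • G k)⟫ = -(τ * ‖G k‖ ^ 2) := by
      rw [inner_neg_right, real_inner_smul_right, real_inner_self_eq_norm_sq]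
    have hn : ‖-(τ • G k)‖ ^ 2 = τ ^ 2 * ‖G k‖ ^ 2 := by
      rw [norm_neg, norm_smul, Real.norm_eq_abs, mul_pow, sq_abs]
    rw [← hGk] at hd
    rw [hi, hn] at hd
    have : (L : ℝ) / 2 * (τ ^ 2 * ‖G k‖ ^ 2) = (τ - c) * ‖G k‖ ^ 2 := by
      rw [hcdef]; ring
    linarith [hd, this]
  have hGle : ∀ k, c * ‖G k‖ ^ 2 ≤ a k - a (k + 1) := by
    intro k
    have := hdesc k
    simp only [hadef]
    linarith
  have ha_anti : Antitone a := by
    apply antitone_nat_of_succ_le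
    intro k
    have h1 := hGle k
    nlinarith [sq_nonneg ‖G k‖, mul_nonneg hc0.le (sq_nonneg ‖G k‖)]
  -- Lyapunov inequality
  have hlyap : ∀ z ∈ closure Λ, g z = g θstar → ∀ k,
      ‖θseq (k + 1) - z‖ ^ 2 + τ ^ 2 / c * a (k + 1) + δ * a k ≤
        ‖θseq k - z‖ ^ 2 + τ ^ 2 / c * a k := by
    intro z hz hgz k
    have hB : a k ≤ ⟪θseq k - z, G k⟫ := by
      have hsg := subgrad_ineq' g hgd hconv (hin k) hz
      have h2 : ⟪gradient g (θseq k), z - θseq k⟫ = -⟪θseq k - z, G k⟫ := by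
        rw [show z - θseq k = -(θseq k - z) by abel, inner_neg_right, real_inner_comm, hGk]
      rw [h2] at hsg
      simp only [hadef]
      linarith [hgz ▸ hsg]
    have hexp : ‖θseq (k + 1) - z‖ ^ 2 =
        ‖θseq k - z‖ ^ 2 - 2 * τ * ⟪θseq k - z, G k⟫ + τ ^ 2 * ‖G k‖ ^ 2 := by
      have h3 : θseq (k + 1) - z = (θseq k - z) - τ • G k := by rw [hstep k, hGk]; abel
      rw [h3, norm_sub_sq_real, real_inner_smul_right, norm_smul, Real.norm_eq_abs,
        mul_pow, sq_abs]
      ring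
    have h1 : τ ^ 2 * ‖G k‖ ^ 2 ≤ τ ^ 2 / c * (a k - a (k + 1)) := by
      have h2 : τ ^ 2 / c * (c * ‖G k‖ ^ 2) ≤ τ ^ 2 / c * (a k - a (k + 1)) :=
        mul_le_mul_of_nonneg_left (hGle k) (by positivity)
      have h3 : τ ^ 2 / c * (c * ‖G k‖ ^ 2) = τ ^ 2 * ‖G k‖ ^ 2 := by
        field_simp
      linarith
    have h4 : 2 * τ * a k ≤ 2 * τ * ⟪θseq k - z, G k⟫ :=
      mul_le_mul_of_nonneg_left hB (by positivity)
    have h6 : 0 ≤ τ ^ 2 / c * a k := mul_nonneg (by positivity) (ha_nonneg k)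
    rw [hexp, hδdef]
    linarith [h1, h4, h6]
  -- Lyapunov for θstar, telescoping sum
  have hstarlyap := hlyap θstar (subset_closure hθstar) rfl
  obtain ⟨V, hVdef⟩ : ∃ V : ℕ → ℝ, V = fun k => ‖θseq k - θstar‖ ^ 2 + τ ^ 2 / c * a k := ⟨_, rfl⟩
  have hVanti : ∀ k, V (k + 1) + δ * a k ≤ V k := by
    intro k; rw [hVdef]; exact hstarlyap k
  have hVnn : ∀ k, 0 ≤ V k := by
    intro k; rw [hVdef]
    exact add_nonneg (sq_nonneg _) (mul_nonneg (by positivity) (ha_nonneg k))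
  have hsum : ∀ N, V N + δ * (∑ k ∈ Finset.range N, a k) ≤ V 0 := by
    intro N
    induction N with
    | zero => simp
    | succ N ih =>
      rw [Finset.sum_range_succ, mul_add]
      linarith [hVanti N, ih]
  have haN : ∀ N : ℕ, 1 ≤ N → a N ≤ V 0 / δ / N := by
    intro N hN
    have hsle : (N : ℝ) * a N ≤ ∑ k ∈ Finset.range N, a k := by
      have := Finset.card_nsmul_le_sum (Finset.range N) a (a N)
        (fun k hk => ha_anti (le_of_lt (Finset.mem_range.mp hk)))
      simpa [nsmul_eq_mul] using this
    have hδs : δ * ((N : ℝ) * a N) ≤ V 0 := by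
      have h5 := hsum N
      have h6 := hVnn N
      nlinarith [mul_le_mul_of_nonneg_left hsle hδ0.le]
    have hNpos : (0 : ℝ) < N := by exact_mod_cast hN
    rw [div_div, le_div_iff₀ (by positivity)]
    calc a N * (δ * N) = δ * ((N : ℝ) * a N) := by ring
      _ ≤ V 0 := hδs
  -- a tends to 0
  have ha_tendsto : Tendsto a atTop (𝓝 0) := by
    apply squeeze_zero' (Eventually.of_forall ha_nonneg)
    · filter_upwards [eventually_ge_atTop 1] with N hN
      exact haN N hN
    · exact tendsto_const_div_atTop_nhds_zero_nat (V 0 / δ)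
  have hgconv : Tendsto (fun i => g (θseq i)) atTop (𝓝 (g θstar)) := by
    have := ha_tendsto.add_const (g θstar)
    simpa [hadef] using this
  -- gradient norms tend to 0
  have hGsq : Tendsto (fun k => ‖G k‖ ^ 2) atTop (𝓝 0) := by
    apply squeeze_zero (fun k => sq_nonneg _) (g := fun k => a k / c)
    · intro k
      have h1 := hGle k
      have h2 := ha_nonneg (k + 1)
      rw [le_div_iff₀ hc0]
      nlinarith
    · simpa using ha_tendsto.div_const c
  have hGtend : Tendsto G atTop (𝓝 0) := by
    rw [tendsto_zero_iff_norm_tendsto_zero]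
    have := (Real.continuous_sqrt.tendsto 0).comp hGsq
    simpa [Function.comp_def, Real.sqrt_sq (norm_nonneg _)] using this
  -- boundedness and subsequence
  have hVle : ∀ k, V k ≤ V 0 := by
    intro k
    have hs := hsum k
    have hsn : (0:ℝ) ≤ ∑ j ∈ Finset.range k, a j := Finset.sum_nonneg fun j _ => ha_nonneg j
    nlinarith [mul_nonneg hδ0.le hsn]
  have hball : ∀ k, θseq k ∈ Metric.closedBall θstar (Real.sqrt (V 0)) := by
    intro k
    rw [Metric.mem_closedBall, dist_eq_norm]
    have h1 : ‖θseq k - θstar‖ ^ 2 ≤ V 0 := by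
      have := hVle k
      have := mul_nonneg (le_of_lt (by positivity : (0:ℝ) < τ ^ 2 / c)) (ha_nonneg k)
      simp only [hVdef] at *
      linarith
    have := Real.sqrt_le_sqrt h1
    rwa [Real.sqrt_sq (norm_nonneg _)] at this
  obtain ⟨θhat, hθhatball, φ, hφmono, hφtend⟩ :=
    (isCompact_closedBall θstar (Real.sqrt (V 0))).tendsto_subseq hball
  have hθhatcl : θhat ∈ closure Λ :=
    mem_closure_of_tendsto hφtend (Eventually.of_forall fun j => hin (φ j))
  have hgrad0 : gradient g θhat = 0 := by
    refine tendsto_nhds_unique ?_ ((hGtend.comp hφmono.tendsto_atTop))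
    have h7 := (hLip.continuous.tendsto θhat).comp hφtend
    have h8 : G ∘ φ = (gradient g) ∘ θseq ∘ φ := by
      funext j; simp [Function.comp, hGk]
    rw [h8]
    exact h7
  have hgθhat : g θhat = g θstar :=
    tendsto_nhds_unique ((hgd.continuous.tendsto θhat).comp hφtend)
      (hgconv.comp hφmono.tendsto_atTop)
  -- Lyapunov for θhat
  obtain ⟨W, hWdef⟩ : ∃ W : ℕ → ℝ, W = fun k => ‖θseq k - θhat‖ ^ 2 + τ ^ 2 / c * a k := ⟨_, rfl⟩
  have hWanti : Antitone W := by
    apply antitone_nat_of_succ_le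
    intro k
    have := hlyap θhat hθhatcl hgθhat k
    have := mul_nonneg hδ0.le (ha_nonneg k)
    simp only [hWdef]
    linarith
  have hWnn : ∀ k, 0 ≤ W k := by
    intro k; rw [hWdef]
    exact add_nonneg (sq_nonneg _) (mul_nonneg (by positivity) (ha_nonneg k))
  have hWsub : Tendsto (fun j => W (φ j)) atTop (𝓝 0) := by
    rw [hWdef]
    have h1 : Tendsto (fun j => ‖θseq (φ j) - θhat‖ ^ 2) atTop (𝓝 0) := by
      have h2 : Tendsto (fun j => θseq (φ j) - θhat) atTop (𝓝 0) := by
        simpa using hφtend.sub_const θhat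
      have h3 := (h2.norm).pow 2
      simpa using h3
    have h4 : Tendsto (fun j => τ ^ 2 / c * a (φ j)) atTop (𝓝 0) := by
      have := (ha_tendsto.comp hφmono.tendsto_atTop).const_mul (τ ^ 2 / c)
      simpa using this
    simpa using h1.add h4
  have hW0 : Tendsto W atTop (𝓝 0) := by
    have hbdd : BddBelow (Set.range W) := ⟨0, fun x ⟨k, hk⟩ => hk ▸ hWnn k⟩
    have hWinf : Tendsto W atTop (𝓝 (⨅ k, W k)) := tendsto_atTop_ciInf hWanti hbdd
    have : (⨅ k, W k) = 0 :=
      tendsto_nhds_unique (hWinf.comp hφmono.tendsto_atTop) hWsub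
    rwa [this] at hWinf
  have hθtend : Tendsto θseq atTop (𝓝 θhat) := by
    rw [tendsto_iff_dist_tendsto_zero]
    apply squeeze_zero (fun k => dist_nonneg) (g := fun k => Real.sqrt (W k))
    · intro k
      rw [dist_eq_norm]
      have h1 : ‖θseq k - θhat‖ ^ 2 ≤ W k := by
        simp only [hWdef]
        have := mul_nonneg (le_of_lt (by positivity : (0:ℝ) < τ ^ 2 / c)) (ha_nonneg k)
        linarith
      have := Real.sqrt_le_sqrt h1
      rwa [Real.sqrt_sq (norm_nonneg _)] at this
    · have := (Real.continuous_sqrt.tendsto 0).comp hW0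
      simpa [Function.comp_def] using this
  exact ⟨θhat, hθhatcl, hθtend, hgrad0, hgconv⟩
end

section
/- Suppose a linear map A on measures satisfies the two-sided restricted isometry (1−γ)‖x‖²_h ≤ ‖Ax‖²₂ ≤ (1+γ)‖x‖²_h on a symmetric set Σ−Σ containing x − x', and let π₁,…,π_k be ε-separated dipoles with pairwise coherence |⟨πᵢ,πⱼ⟩_h| ≤ μ‖πᵢ‖_h‖πⱼ‖_h (i≠j), with Σπᵢ ∈ Σ−Σ. Then (1−γ)(1−(k−1)μ)·Σᵢ‖πᵢ‖²_h ≤ ‖A(Σᵢ πᵢ)‖²₂ ≤ (1+γ)(1+(k−1)μ)·Σᵢ‖πᵢ‖²_h. -/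
open Finset

lemma near_orth_bound {V : Type*} [NormedAddCommGroup V]
    [InnerProductSpace ℝ V] {k : ℕ} (μ : ℝ) (hμ : 0 ≤ μ)
    (π : Fin k → V)
    (hcoh : ∀ i j, i ≠ j → |(inner ℝ (π i) (π j) : ℝ)| ≤ μ * ‖π i‖ * ‖π j‖) :
    |‖∑ i, π i‖^2 - ∑ i, ‖π i‖^2| ≤ ((k : ℝ) - 1) * μ * ∑ i, ‖π i‖^2 := by
  rcases Nat.eq_zero_or_pos k with hk | hk
  · subst hk; simp
  have h1 : ‖∑ i, π i‖^2 = ∑ i, ∑ j, (inner ℝ (π i) (π j) : ℝ) := by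
    rw [← real_inner_self_eq_norm_sq, sum_inner]
    exact Finset.sum_congr rfl fun i _ => inner_sum _ _ _
  have hdiag : ∀ i : Fin k, ∑ j, (inner ℝ (π i) (π j) : ℝ) =
      ‖π i‖^2 + ∑ j ∈ univ.erase i, (inner ℝ (π i) (π j) : ℝ) := by
    intro i
    rw [← Finset.add_sum_erase _ _ (mem_univ i), real_inner_self_eq_norm_sq]
  have h2 : ‖∑ i, π i‖^2 - ∑ i, ‖π i‖^2 =
      ∑ i, ∑ j ∈ univ.erase i, (inner ℝ (π i) (π j) : ℝ) := by
    rw [h1]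
    rw [Finset.sum_congr rfl fun i _ => hdiag i, Finset.sum_add_distrib]
    ring
  rw [h2]
  calc |∑ i, ∑ j ∈ univ.erase i, (inner ℝ (π i) (π j) : ℝ)|
      ≤ ∑ i, |∑ j ∈ univ.erase i, (inner ℝ (π i) (π j) : ℝ)| :=
        Finset.abs_sum_le_sum_abs _ _
    _ ≤ ∑ i, ∑ j ∈ univ.erase i, |(inner ℝ (π i) (π j) : ℝ)| :=
        Finset.sum_le_sum fun i _ => Finset.abs_sum_le_sum_abs _ _
    _ ≤ ∑ i, ∑ j ∈ univ.erase i, μ * ((‖π i‖^2 + ‖π j‖^2) / 2) := by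
        refine Finset.sum_le_sum fun i _ => Finset.sum_le_sum fun j hj => ?_
        have hij : i ≠ j := (Finset.ne_of_mem_erase hj).symm
        have := hcoh i j hij
        nlinarith [sq_nonneg (‖π i‖ - ‖π j‖), abs_nonneg (inner ℝ (π i) (π j) : ℝ)]
    _ = ((k : ℝ) - 1) * μ * ∑ i, ‖π i‖^2 := by
        have hcard : ∀ i : Fin k, ((univ.erase i).card : ℝ) = (k : ℝ) - 1 := by
          intro i
          rw [Finset.card_erase_of_mem (mem_univ i)]
          simp [Nat.cast_sub hk]
        have hsym : ∑ i : Fin k, ∑ j ∈ univ.erase i, ‖π j‖^2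
            = ((k : ℝ) - 1) * ∑ i, ‖π i‖^2 := by
          rw [Finset.sum_comm' (t' := univ) (s' := fun j => univ.erase j)]
          · rw [Finset.mul_sum]
            refine Finset.sum_congr rfl fun j _ => ?_
            rw [Finset.sum_const, nsmul_eq_mul, hcard j]
          · intro i j
            simp [Finset.mem_erase, eq_comm, and_comm, ne_comm]
        have e1 : ∀ i : Fin k, ∑ j ∈ univ.erase i, μ * ((‖π i‖^2 + ‖π j‖^2) / 2)
            = μ/2 * (((k:ℝ)-1) * ‖π i‖^2) + μ/2 * ∑ j ∈ univ.erase i, ‖π j‖^2 := by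
          intro i
          rw [Finset.sum_congr rfl (fun j _ =>
            show μ * ((‖π i‖^2 + ‖π j‖^2) / 2)
              = μ/2 * ‖π i‖^2 + μ/2 * ‖π j‖^2 by ring)]
          rw [Finset.sum_add_distrib, Finset.sum_const, nsmul_eq_mul, hcard i,
            ← Finset.mul_sum]
          ring
        rw [Finset.sum_congr rfl fun i _ => e1 i, Finset.sum_add_distrib]
        simp only [← Finset.mul_sum]
        rw [hsym]
        ring

/-- RIP combined with coherence: if `A` satisfies the two-sided restricted isometry
with constant `γ` on a set `S` containing `Σᵢ πᵢ`, and the `πᵢ` are pairwise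
`μ`-coherent, then
`(1-γ)(1-(k-1)μ) Σ‖πᵢ‖² ≤ ‖A(Σπᵢ)‖² ≤ (1+γ)(1+(k-1)μ) Σ‖πᵢ‖²`. -/
theorem rip_on_coherent_family {V : Type*} [NormedAddCommGroup V]
    [InnerProductSpace ℝ V] {m k : ℕ}
    (A : V →ₗ[ℝ] EuclideanSpace ℝ (Fin m)) (S : Set V)
    (γ μ : ℝ) (hγ0 : 0 ≤ γ) (hγ1 : γ < 1) (hμ : 0 ≤ μ)
    (hkμ : ((k : ℝ) - 1) * μ < 1)
    (hRIP : ∀ x ∈ S, (1 - γ) * ‖x‖^2 ≤ ‖A x‖^2 ∧ ‖A x‖^2 ≤ (1 + γ) * ‖x‖^2)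
    (π : Fin k → V)
    (hcoh : ∀ i j, i ≠ j → |(inner ℝ (π i) (π j) : ℝ)| ≤ μ * ‖π i‖ * ‖π j‖)
    (hsum : (∑ i, π i) ∈ S) :
    (1 - γ) * (1 - ((k : ℝ) - 1) * μ) * ∑ i, ‖π i‖^2 ≤ ‖A (∑ i, π i)‖^2 ∧
      ‖A (∑ i, π i)‖^2 ≤ (1 + γ) * (1 + ((k : ℝ) - 1) * μ) * ∑ i, ‖π i‖^2 := by
  obtain ⟨hlo, hhi⟩ := hRIP _ hsum
  have hno := near_orth_bound μ hμ π hcoh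
  have habs := abs_le.mp hno
  set N := ∑ i, ‖π i‖^2 with hN
  set X := ‖∑ i, π i‖^2 with hX
  have hNnn : 0 ≤ N := Finset.sum_nonneg fun i _ => sq_nonneg _
  constructor
  · nlinarith [habs.1, hlo]
  · nlinarith [habs.2, hhi, sq_nonneg ‖A (∑ i, π i)‖]
end
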